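/- For every nonzero complex number b and every point (q₁,p₁,q₂,p₂) ∈ ℂ⁴ with q₁p₁q₂p₂ ≠ 0, the determinant of the 4×4 Jacobian matrix of partial derivatives of the four components of φ with respect to (q₁,p₁,q₂,p₂) equals (1+b·q₁)(1+b·q₂)/(q₁q₂p₁p₂)². -/

import Mathlib

theorem my_det_fin_four {R : Type*} [CommRing R] (A : Matrix (Fin 4) (Fin 4) R) :
    A.det =
      A 0 0 * (A 1 1 * A 2 2 * A 3 3 - A 1 1 * A 2 3 * A 3 2 - A 1 2 * A 2 1 * A 3 3
        + A 1 2 * A 2 3 * A 3 1 + A 1 3 * A 2 1 * A 3 2 - A 1 3 * A 2 2 * A 3 1)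
      - A 0 1 * (A 1 0 * A 2 2 * A 3 3 - A 1 0 * A 2 3 * A 3 2 - A 1 2 * A 2 0 * A 3 3
        + A 1 2 * A 2 3 * A 3 0 + A 1 3 * A 2 0 * A 3 2 - A 1 3 * A 2 2 * A 3 0)
      + A 0 2 * (A 1 0 * A 2 1 * A 3 3 - A 1 0 * A 2 3 * A 3 1 - A 1 1 * A 2 0 * A 3 3
        + A 1 1 * A 2 3 * A 3 0 + A 1 3 * A 2 0 * A 3 1 - A 1 3 * A 2 1 * A 3 0)
      - A 0 3 * (A 1 0 * A 2 1 * A 3 2 - A 1 0 * A 2 2 * A 3 1 - A 1 1 * A 2 0 * A 3 2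
        + A 1 1 * A 2 2 * A 3 0 + A 1 2 * A 2 0 * A 3 1 - A 1 2 * A 2 1 * A 3 0) := by
  rw [Matrix.det_succ_row_zero]
  simp [Fin.sum_univ_succ, Matrix.det_fin_three, Fin.succAbove, Fin.ext_iff,
    show (Fin.succ 2 : Fin 4) = 3 from rfl, show (Fin.castSucc 2 : Fin 4) = 2 from rfl]
  ring

/- STATEMENT 0: The determinant of the 4×4 Jacobian matrix of
φ(q₁,p₁,q₂,p₂) = ((1+b·q₂)/(q₁q₂p₂), q₂, (1+b·q₁)/(q₁p₁q₂), q₁)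
equals (1+b·q₁)(1+b·q₂)/(q₁q₂p₁p₂)² at every point with q₁p₁q₂p₂ ≠ 0. -/
theorem jacobian_det_of_phi (b : ℂ) (hb : b ≠ 0) (q1 p1 q2 p2 : ℂ)
    (h : q1 * p1 * q2 * p2 ≠ 0) :
    (!![deriv (fun t => (1 + b * q2) / (t * q2 * p2)) q1,
        deriv (fun _t => (1 + b * q2) / (q1 * q2 * p2)) p1,
        deriv (fun t => (1 + b * t) / (q1 * t * p2)) q2,
        deriv (fun t => (1 + b * q2) / (q1 * q2 * t)) p2;
        deriv (fun _t => q2) q1,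
        deriv (fun _t => q2) p1,
        deriv (fun t : ℂ => t) q2,
        deriv (fun _t => q2) p2;
        deriv (fun t => (1 + b * t) / (t * p1 * q2)) q1,
        deriv (fun t => (1 + b * q1) / (q1 * t * q2)) p1,
        deriv (fun t => (1 + b * q1) / (q1 * p1 * t)) q2,
        deriv (fun _t => (1 + b * q1) / (q1 * p1 * q2)) p2;
        deriv (fun t : ℂ => t) q1,
        deriv (fun _t => q1) p1,
        deriv (fun _t => q1) q2,
        deriv (fun _t => q1) p2]).det
      = (1 + b * q1) * (1 + b * q2) / (q1 * q2 * p1 * p2) ^ 2 := by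
  have hq1 : q1 ≠ 0 := by intro h'; simp [h'] at h
  have hp1 : p1 ≠ 0 := by intro h'; simp [h'] at h
  have hq2 : q2 ≠ 0 := by intro h'; simp [h'] at h
  have hp2 : p2 ≠ 0 := by intro h'; simp [h'] at h
  have g11 : q1 * q2 * p2 ≠ 0 := by simp [hq1, hq2, hp2]
  have g13 : q1 * q2 * p2 ≠ 0 := g11
  have g31 : q1 * p1 * q2 ≠ 0 := by simp [hq1, hp1, hq2]
  have d11 : deriv (fun t => (1 + b * q2) / (t * q2 * p2)) q1
      = (0 * (q1 * q2 * p2) - (1 + b * q2) * (1 * q2 * p2)) / (q1 * q2 * p2) ^ 2 :=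
    (((hasDerivAt_const q1 (1 + b * q2)).div
      (((hasDerivAt_id q1).mul_const q2).mul_const p2) g11)).deriv
  have d13 : deriv (fun t => (1 + b * t) / (q1 * t * p2)) q2
      = (b * (q1 * q2 * p2) - (1 + b * q2) * (q1 * 1 * p2)) / (q1 * q2 * p2) ^ 2 :=
    ((((hasDerivAt_const q2 (1 : ℂ)).add ((hasDerivAt_id q2).const_mul b)).div
      (((hasDerivAt_id q2).const_mul q1).mul_const p2) g13).congr_deriv (by simp only [id_eq, Pi.add_apply]; ring)).deriv
  have d14 : deriv (fun t => (1 + b * q2) / (q1 * q2 * t)) p2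
      = (0 * (q1 * q2 * p2) - (1 + b * q2) * (q1 * q2 * 1)) / (q1 * q2 * p2) ^ 2 :=
    ((hasDerivAt_const p2 (1 + b * q2)).div
      (((hasDerivAt_id p2).const_mul (q1 * q2)).congr_deriv (by ring)) g11).deriv
  have d31 : deriv (fun t => (1 + b * t) / (t * p1 * q2)) q1
      = (b * (q1 * p1 * q2) - (1 + b * q1) * (1 * p1 * q2)) / (q1 * p1 * q2) ^ 2 :=
    ((((hasDerivAt_const q1 (1 : ℂ)).add ((hasDerivAt_id q1).const_mul b)).div
      (((hasDerivAt_id q1).mul_const p1).mul_const q2) g31).congr_deriv (by simp only [id_eq, Pi.add_apply]; ring)).deriv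
  have d32 : deriv (fun t => (1 + b * q1) / (q1 * t * q2)) p1
      = (0 * (q1 * p1 * q2) - (1 + b * q1) * (q1 * 1 * q2)) / (q1 * p1 * q2) ^ 2 :=
    ((hasDerivAt_const p1 (1 + b * q1)).div
      (((hasDerivAt_id p1).const_mul q1).mul_const q2) g31).deriv
  have d33 : deriv (fun t => (1 + b * q1) / (q1 * p1 * t)) q2
      = (0 * (q1 * p1 * q2) - (1 + b * q1) * (q1 * p1 * 1)) / (q1 * p1 * q2) ^ 2 :=
    ((hasDerivAt_const q2 (1 + b * q1)).div
      (((hasDerivAt_id q2).const_mul (q1 * p1)).congr_deriv (by ring)) g31).deriv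
  rw [my_det_fin_four]
  simp only [Matrix.cons_val', Matrix.cons_val_zero, Matrix.cons_val_one, Matrix.head_cons,
    Matrix.empty_val', Matrix.cons_val_fin_one, Matrix.head_fin_const, Matrix.of_apply,
    Matrix.cons_val_two, Matrix.tail_cons, Matrix.cons_val_three,
    d11, d13, d14, d31, d32, d33, deriv_const', deriv_id'']
  field_simp
  ring
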